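/- With structure equations dη^i = 0 (i=1,2,3), dη^4 = a_2 η^{13} + a_3 η^{1 1̄} + a_5 η^{1 3̄} + a_{10} η^{3 1̄} + a_{12} η^{3 3̄}, the deformed coframe η^j_{r,s} (η^1_{r,s} = η^1 + rη̄^1, η^2_{r,s} = η^2, η^3_{r,s} = η^3 + sη̄^3, η^4_{r,s} = η^4, |r|,|s| < 1) satisfies dη^4_{r,s} = [(a_2 + r̄a_{10} − s̄a_5)/((1−|r|²)(1−|s|²))] η_{r,s}^{13} + [a_3/(1−|r|²)] η_{r,s}^{1 1̄} + [(a_5 − s a_2 − r̄ s a_{10})/((1−|r|²)(1−|s|²))] η_{r,s}^{1 3̄} + [(a_{10} + r a_2 − r s̄ a_5)/((1−|r|²)(1−|s|²))] η_{r,s}^{3 1̄} + [a_{12}/(1−|s|²)] η_{r,s}^{3 3̄} + [(−r a_5 + s a_{10} + r s a_2)/((1−|r|²)(1−|s|²))] η_{r,s}^{1̄ 3̄}. -/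

import Mathlib

/-!
STATEMENT 9: With structure equations dη^i = 0 (i=1,2,3),
dη^4 = a₂η^{13} + a₃η^{11̄} + a₅η^{13̄} + a₁₀η^{31̄} + a₁₂η^{33̄}, the deformed coframe
η^1_{r,s} = η^1 + rη̄^1, η^2_{r,s} = η^2, η^3_{r,s} = η^3 + sη̄^3, η^4_{r,s} = η^4
(|r|, |s| < 1) satisfies the displayed structure equation for dη^4_{r,s} in terms of the
monomials η_{r,s}^{13}, η_{r,s}^{11̄}, η_{r,s}^{13̄}, η_{r,s}^{31̄}, η_{r,s}^{33̄},
η_{r,s}^{1̄3̄} with the stated rational coefficients.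
-/

open ExteriorAlgebra

set_option maxHeartbeats 1000000
noncomputable section

abbrev Λ8 : Type := ExteriorAlgebra ℂ (Fin 8 → ℂ)

def gen (j : Fin 8) : Λ8 := ExteriorAlgebra.ι ℂ (Pi.single j 1)

def eta (j : Fin 4) : Λ8 := gen (Fin.castAdd 4 j)

def etb (j : Fin 4) : Λ8 := gen (Fin.natAdd 4 j)

def etaRS (r s : ℂ) : Fin 4 → Λ8 :=
  ![eta 0 + r • etb 0, eta 1, eta 2 + s • etb 2, eta 3]

def etbRS (r s : ℂ) : Fin 4 → Λ8 :=
  ![etb 0 + (starRingEnd ℂ r) • eta 0, etb 1, etb 2 + (starRingEnd ℂ s) • eta 2, etb 3]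


lemma gen_sq (i : Fin 8) : gen i * gen i = 0 := ExteriorAlgebra.ι_sq_zero _

lemma gen_swap (i j : Fin 8) : gen i * gen j = -(gen j * gen i) :=
  eq_neg_of_add_eq_zero_left (ExteriorAlgebra.ι_add_mul_swap _ _)

theorem statement9 (a2 a3 a5 a10 a12 : ℂ) (r s : ℂ)
    (hr : ‖r‖ < 1) (hs : ‖s‖ < 1)
    (d : Λ8 →ₗ[ℂ] Λ8)
    (hdL : ∀ (v : Fin 8 → ℂ) (y : Λ8),
      d (ExteriorAlgebra.ι ℂ v * y) = d (ExteriorAlgebra.ι ℂ v) * y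
        - ExteriorAlgebra.ι ℂ v * d y)
    (hd1 : d 1 = 0)
    (hclosed : ∀ j : Fin 4, j ≠ 3 → d (eta j) = 0 ∧ d (etb j) = 0)
    (hd4 : d (eta 3) = a2 • (eta 0 * eta 2) + a3 • (eta 0 * etb 0)
      + a5 • (eta 0 * etb 2) + a10 • (eta 2 * etb 0) + a12 • (eta 2 * etb 2))
    (hdb4 : d (etb 3) = (starRingEnd ℂ a2) • (etb 0 * etb 2)
      + (starRingEnd ℂ a3) • (etb 0 * eta 0) + (starRingEnd ℂ a5) • (etb 0 * eta 2)
      + (starRingEnd ℂ a10) • (etb 2 * eta 0) + (starRingEnd ℂ a12) • (etb 2 * eta 2)) :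
    d (etaRS r s 3) =
      ((a2 + (starRingEnd ℂ r) * a10 - (starRingEnd ℂ s) * a5) /
          (((1 - Complex.normSq r) * (1 - Complex.normSq s) : ℝ) : ℂ))
        • (etaRS r s 0 * etaRS r s 2)
      + (a3 / (((1 - Complex.normSq r : ℝ)) : ℂ)) • (etaRS r s 0 * etbRS r s 0)
      + ((a5 - s * a2 - (starRingEnd ℂ r) * s * a10) /
          (((1 - Complex.normSq r) * (1 - Complex.normSq s) : ℝ) : ℂ))
        • (etaRS r s 0 * etbRS r s 2)
      + ((a10 + r * a2 - r * (starRingEnd ℂ s) * a5) /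
          (((1 - Complex.normSq r) * (1 - Complex.normSq s) : ℝ) : ℂ))
        • (etaRS r s 2 * etbRS r s 0)
      + (a12 / (((1 - Complex.normSq s : ℝ)) : ℂ)) • (etaRS r s 2 * etbRS r s 2)
      + ((-r * a5 + s * a10 + r * s * a2) /
          (((1 - Complex.normSq r) * (1 - Complex.normSq s) : ℝ) : ℂ))
        • (etbRS r s 0 * etbRS r s 2) := by

  have h3 : etaRS r s 3 = eta 3 := by simp [etaRS]
  have hr1 : ((1 - Complex.normSq r : ℝ) : ℂ) = 1 - r * (starRingEnd ℂ) r := by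
    push_cast [Complex.mul_conj]; ring
  have hs1 : ((1 - Complex.normSq s : ℝ) : ℂ) = 1 - s * (starRingEnd ℂ) s := by
    push_cast [Complex.mul_conj]; ring
  have hrne : (1 : ℂ) - r * (starRingEnd ℂ) r ≠ 0 := by
    rw [← hr1]
    simp only [ne_eq, Complex.ofReal_eq_zero]
    nlinarith [Complex.sq_norm r, Complex.normSq_nonneg r, norm_nonneg r]
  have hsne : (1 : ℂ) - s * (starRingEnd ℂ) s ≠ 0 := by
    rw [← hs1]
    simp only [ne_eq, Complex.ofReal_eq_zero]
    nlinarith [Complex.sq_norm s, Complex.normSq_nonneg s, norm_nonneg s]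
  have w1 : etb 0 * eta 0 = -(eta 0 * etb 0) := gen_swap _ _
  have w2 : etb 0 * eta 2 = -(eta 2 * etb 0) := gen_swap _ _
  have w3 : etb 2 * eta 0 = -(eta 0 * etb 2) := gen_swap _ _
  have w4 : etb 2 * eta 2 = -(eta 2 * etb 2) := gen_swap _ _
  have w5 : eta 2 * eta 0 = -(eta 0 * eta 2) := gen_swap _ _
  have w6 : etb 2 * etb 0 = -(etb 0 * etb 2) := gen_swap _ _
  have q1 : eta 0 * eta 0 = 0 := gen_sq _
  have q2 : eta 2 * eta 2 = 0 := gen_sq _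
  have q3 : etb 0 * etb 0 = 0 := gen_sq _
  have q4 : etb 2 * etb 2 = 0 := gen_sq _
  rw [h3, hd4]
  simp only [etaRS, etbRS, Matrix.cons_val_zero, Matrix.cons_val_two, Matrix.tail_cons,
    Matrix.head_cons, Complex.ofReal_mul, hr1, hs1]
  simp only [mul_add, add_mul, smul_mul_assoc, mul_smul_comm, smul_smul,
    w1, w2, w3, w4, w5, w6, q1, q2, q3, q4, smul_neg, smul_zero]
  match_scalars
  · simp only [div_mul_eq_mul_div, ← add_div]
    rw [eq_div_iff (by first | exact mul_ne_zero hrne hsne | exact hrne | exact hsne)]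
    ring
  · simp only [div_mul_eq_mul_div, ← add_div]
    rw [eq_div_iff (by first | exact mul_ne_zero hrne hsne | exact hrne | exact hsne)]
    ring
  · simp only [div_mul_eq_mul_div, ← add_div]
    rw [eq_div_iff (by first | exact mul_ne_zero hrne hsne | exact hrne | exact hsne)]
    ring
  · simp only [div_mul_eq_mul_div, ← add_div]
    rw [eq_div_iff (by first | exact mul_ne_zero hrne hsne | exact hrne | exact hsne)]
    ring
  · simp only [div_mul_eq_mul_div, ← add_div]
    rw [eq_div_iff (by first | exact mul_ne_zero hrne hsne | exact hrne | exact hsne)]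
    ring
  · simp only [div_mul_eq_mul_div, ← add_div]
    rw [eq_div_iff (by first | exact mul_ne_zero hrne hsne | exact hrne | exact hsne)]
    ring
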